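/- Let C = v₀ + pos(ε₁,…,ε_k) ⊂ ℝ^k be a simplicial cone with 0 in its interior, let q_j = (−1)^{j−1} ε₁ × ⋯ × ε̂_j × ⋯ × ε_k (generalized cross product omitting ε_j) and q̃_j = q_j/⟨v₀,q_j⟩. For 0 ≤ m < k, I ⊆ [k] with |I| = m, J = [k]\I, ℓ = |J|, set S_I = conv({0, v₀} ∪ {v₀+ε_i : i∈I}) and Δ_J = conv{q̃_j : j∈J}. Then vol_{ℓ−1}(Δ_J)/vol_{m+1}(S_I) = ((m+1)!/(ℓ−1)!) · vol_k(𝓔)^{ℓ−1} / ∏_{j∈J}|⟨v₀, q_j⟩|, where 𝓔 is the parallelepiped spanned by ε₁,…,ε_k, so vol_k(𝓔) = |det(ε₁,…,ε_k)|. -/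

import Mathlib

open Matrix

/-- The generalized cross product `q_j = (−1)^{j−1} ε₁ × ⋯ × ε̂_j × ⋯ × ε_k`
(with the paper's sign convention), characterized by
`⟨qvec ε j, x⟩ = det(ε₁, …, ε_{j−1}, x, ε_{j+1}, …, ε_k)`; in particular
`⟨qvec ε i, ε j⟩ = W δ_{ij}` with `W = det(ε₁, …, ε_k)`.  Its `i`-th component is
the determinant of the matrix with columns `ε₁, …, ε_k` in which column `j` is
replaced by the standard basis vector `e_i`. -/
def qvec {k : ℕ} (ε : Fin k → (Fin k → ℝ)) (j : Fin k) : Fin k → ℝ :=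
  fun i => ((Matrix.of fun a b => ε b a).updateCol j (Pi.single i 1)).det

private lemma det_mul_det_submatrix {n ι : Type*} [Fintype n] [Fintype ι]
    [DecidableEq n] [DecidableEq ι]
    (X Y : Matrix n ι ℝ) (e : n ≃ ι) :
    (X.submatrix id ⇑e).det * (Y.submatrix id ⇑e).det = (Xᵀ * Y).det := by
  have h : (X.submatrix id ⇑e)ᵀ * (Y.submatrix id ⇑e) = (Xᵀ * Y).submatrix ⇑e ⇑e := by
    rw [Matrix.transpose_submatrix]
    have h2 := Matrix.submatrix_mul_equiv Xᵀ Y ⇑e (Equiv.refl n) ⇑e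
    simpa using h2
  calc (X.submatrix id ⇑e).det * (Y.submatrix id ⇑e).det
      = ((X.submatrix id ⇑e)ᵀ * (Y.submatrix id ⇑e)).det := by
        rw [Matrix.det_mul, Matrix.det_transpose]
    _ = (Xᵀ * Y).det := by rw [h, Matrix.det_submatrix_equiv_self]

/-- **Volume ratio theorem.** -/
theorem volume_ratio (k : ℕ) (ε : Fin k → (Fin k → ℝ)) (hε : LinearIndependent ℝ ε)
    (v₀ : Fin k → ℝ)
    -- `0` lies in the interior of the cone `C = v₀ + pos(ε₁,…,ε_k)`
    (hint : ∃ c : Fin k → ℝ, (∀ i, c i < 0) ∧ v₀ = ∑ i, c i • ε i)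
    (I : Finset (Fin k)) (hm : I.card < k)
    (W : ℝ) (hW : W = (Matrix.of fun a b => ε b a).det)
    (q : Fin k → (Fin k → ℝ)) (hq : ∀ j, q j = qvec ε j)
    (qt : Fin k → (Fin k → ℝ)) (hqt : ∀ j, qt j = (v₀ ⬝ᵥ q j)⁻¹ • q j)
    -- the Gram matrix of the edge vectors of `S_I` from the vertex `0`
    (u : Option I → (Fin k → ℝ))
    (hu0 : u none = v₀) (hui : ∀ i : I, u (some i) = v₀ + ε i)
    (GS : Matrix (Option I) (Option I) ℝ) (hGS : ∀ i j, GS i j = u i ⬝ᵥ u j)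
    -- the Gram matrix of the edge vectors of `Δ_J` from the vertex `q̃_{j₁}`
    (j₁ : Fin k) (hj₁ : j₁ ∈ Iᶜ)
    (GD : Matrix (Iᶜ.erase j₁) (Iᶜ.erase j₁) ℝ)
    (hGD : ∀ i j, GD i j = (qt j₁ - qt i.1) ⬝ᵥ (qt j₁ - qt j.1))
    -- the volumes, via Gram's determinant formula
    (volS volD : ℝ)
    (hvolS : volS = Real.sqrt GS.det / (Nat.factorial (I.card + 1) : ℝ))
    (hvolD : volD = Real.sqrt GD.det / (Nat.factorial (Iᶜ.card - 1) : ℝ)) :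
    volD / volS
      = ((Nat.factorial (I.card + 1) : ℝ) / (Nat.factorial (Iᶜ.card - 1) : ℝ))
          * |W| ^ (Iᶜ.card - 1) / ∏ j ∈ Iᶜ, |v₀ ⬝ᵥ q j| := by
  classical
  obtain ⟨c, hcneg, hv₀⟩ := hint
  have hc0 : ∀ j, c j ≠ 0 := fun j => (hcneg j).ne
  have hj₁I : j₁ ∉ I := Finset.mem_compl.mp hj₁
  set A : Matrix (Fin k) (Fin k) ℝ := Matrix.of fun a b => ε b a with hAdef
  have hAe : ∀ a b, A a b = ε b a := fun a b => rfl
  have hcol : ∀ i, (A *ᵥ Pi.single i 1) = ε i := by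
    intro i; funext a
    simp [Matrix.mulVec_single, hAe]
  have hdetA : A.det ≠ 0 := by
    have h1 : LinearIndependent ℝ (fun i => Aᵀ i) := hε
    have h2 : IsUnit Aᵀ := Matrix.linearIndependent_rows_iff_isUnit.mp h1
    have h3 := (Matrix.isUnit_iff_isUnit_det _).mp h2
    rw [Matrix.det_transpose] at h3
    exact isUnit_iff_ne_zero.mp h3
  have hWA : W = A.det := hW
  have hWne : W ≠ 0 := by rw [hWA]; exact hdetA
  -- the defining property of q
  have hq' : ∀ (x : Fin k → ℝ) (j : Fin k), x ⬝ᵥ q j = Matrix.cramer A x j := by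
    intro x j
    have hx : (∑ i, x i • (Pi.single i 1 : Fin k → ℝ)) = x := by
      funext a
      rw [Finset.sum_apply]
      simp [Pi.single_apply]
    calc x ⬝ᵥ q j = ∑ i, x i * Matrix.cramer A (Pi.single i 1) j := by
          simp only [dotProduct, hq, qvec, ← hAdef, ← Matrix.cramer_apply]
      _ = Matrix.cramer A x j := by
          conv_rhs => rw [← hx]
          rw [map_sum, Finset.sum_apply]
          refine Finset.sum_congr rfl fun i _ => ?_
          rw [_root_.map_smul]
          simp
  have hεdot : ∀ i j, ε i ⬝ᵥ q j = W * (if j = i then 1 else 0) := by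
    intro i j
    rw [hq', ← hcol i, Matrix.cramer_eq_adjugate_mulVec, Matrix.mulVec_mulVec,
      Matrix.adjugate_mul, Matrix.smul_mulVec, Matrix.one_mulVec, hWA]
    simp [Pi.single_apply]
  have hvq : ∀ j, v₀ ⬝ᵥ q j = W * c j := by
    intro j
    calc v₀ ⬝ᵥ q j = Matrix.cramer A v₀ j := hq' _ _
      _ = ∑ i, c i * Matrix.cramer A (ε i) j := by
          rw [hv₀, map_sum, Finset.sum_apply]
          refine Finset.sum_congr rfl fun i _ => ?_
          rw [_root_.map_smul]; simp
      _ = ∑ i, c i * (W * if j = i then 1 else 0) := by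
          refine Finset.sum_congr rfl fun i _ => ?_
          rw [← hq', hεdot]
      _ = W * c j := by
          simp only [mul_ite, mul_one, mul_zero]
          simp [Finset.sum_ite_eq, mul_comm]
  have hvqne : ∀ j, v₀ ⬝ᵥ q j ≠ 0 := by
    intro j; rw [hvq]; exact mul_ne_zero hWne (hc0 j)
  -- q and qt as columns of the inverse transpose
  set B : Matrix (Fin k) (Fin k) ℝ := (Aᵀ)⁻¹ with hBdef
  have hdetAT : Aᵀ.det ≠ 0 := by rwa [Matrix.det_transpose]
  have hATB : Aᵀ * B = 1 := Matrix.mul_nonsing_inv _ (isUnit_iff_ne_zero.mpr hdetAT)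
  have hBAT : B * Aᵀ = 1 := Matrix.nonsing_inv_mul _ (isUnit_iff_ne_zero.mpr hdetAT)
  have hqB : ∀ j, q j = W • (B *ᵥ Pi.single j 1) := by
    intro j
    funext i
    have h1 : q j i = Matrix.cramer A (Pi.single i 1) j := by
      rw [hq]
      simp only [qvec, ← hAdef, ← Matrix.cramer_apply]
    have h2 : Matrix.cramer A (Pi.single i 1) j = A.adjugate j i := by
      rw [Matrix.cramer_eq_adjugate_mulVec]
      simp [Matrix.mulVec_single]
    have h3 : B i j = (A.det)⁻¹ * A.adjugate j i := by
      rw [hBdef, ← Matrix.transpose_nonsing_inv, Matrix.transpose_apply, Matrix.inv_def]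
      simp [Ring.inverse_eq_inv]
    rw [h1, h2]
    simp only [Pi.smul_apply, smul_eq_mul, Matrix.mulVec_single_one, Matrix.col_apply, mul_one, h3, hWA]
    field_simp
  have hqtB : ∀ j, qt j = (c j)⁻¹ • (B *ᵥ Pi.single j 1) := by
    intro j
    rw [hqt, hvq, hqB, smul_smul]
    congr 1
    rw [mul_inv, mul_comm, ← mul_assoc, mul_inv_cancel₀ hWne, one_mul]
  -- matrices
  set MS : Matrix (Fin k) (Option ↥I) ℝ :=
    Matrix.of fun a p => p.elim (c a) (fun i => c a + (if a = i.1 then 1 else 0)) with hMSdef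
  set MD : Matrix (Fin k) ↥(Iᶜ.erase j₁) ℝ :=
    Matrix.of fun a j => (c j₁)⁻¹ * (if a = j₁ then 1 else 0)
      - (c j.1)⁻¹ * (if a = j.1 then 1 else 0) with hMDdef
  set NN : Matrix (Fin k) ↥(Iᶜ.erase j₁) ℝ :=
    Matrix.of fun a j => if a = j.1 then (1:ℝ) else 0 with hNNdef
  have hjJ : ∀ j : ↥(Iᶜ.erase j₁), j.1 ≠ j₁ ∧ j.1 ∉ I := by
    intro j
    obtain ⟨h1, h2⟩ := Finset.mem_erase.mp j.2
    exact ⟨h1, Finset.mem_compl.mp h2⟩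
  have hX : ∀ (p : Option ↥I) (a : Fin k), (A * MS) a p = u p a := by
    intro p a
    cases p with
    | none =>
      rw [hu0, hv₀]
      simp only [Matrix.mul_apply, hMSdef, Matrix.of_apply, Option.elim]
      rw [Finset.sum_apply]
      simp [hAe, mul_comm]
    | some i =>
      rw [hui, hv₀]
      simp only [Matrix.mul_apply, hMSdef, Matrix.of_apply, Option.elim, Pi.add_apply]
      rw [Finset.sum_apply]
      simp [hAe, mul_add, mul_ite, Finset.sum_add_distrib, Finset.sum_ite_eq', mul_comm]
  have hGSeq : GS = (A * MS)ᵀ * (A * MS) := by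
    ext p r
    rw [hGS, Matrix.mul_apply]
    simp only [Matrix.transpose_apply, hX]
    rfl
  have hYcol : ∀ (jj : ↥(Iᶜ.erase j₁)) (a : Fin k),
      (B * MD) a jj = (qt j₁ - qt jj.1) a := by
    intro jj a
    simp only [Matrix.mul_apply, hMDdef, Matrix.of_apply, Pi.sub_apply]
    rw [hqtB, hqtB]
    simp only [Pi.smul_apply, smul_eq_mul, Matrix.mulVec_single_one, Matrix.col_apply, mul_one]
    simp [sub_mul, ite_mul, Finset.sum_sub_distrib, Finset.sum_ite_eq', mul_comm]
  have hGDeq : GD = (B * MD)ᵀ * (B * MD) := by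
    ext p r
    rw [hGD, Matrix.mul_apply]
    simp only [Matrix.transpose_apply, hYcol]
    rfl
  have horth : MSᵀ * MD = 0 := by
    ext p j
    obtain ⟨hne, hnotI⟩ := hjJ j
    simp only [Matrix.mul_apply, Matrix.transpose_apply, hMSdef, hMDdef, Matrix.of_apply,
      Matrix.zero_apply, mul_sub, mul_ite, mul_one, mul_zero]
    rw [Finset.sum_sub_distrib]
    simp only [Finset.sum_ite_eq', Finset.mem_univ, if_true]
    cases p with
    | none =>
      simp [Option.elim, mul_inv_cancel₀ (hc0 j₁), mul_inv_cancel₀ (hc0 j.1)]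
    | some i =>
      have h1 : ¬ j₁ = i.1 := fun h => hj₁I (h ▸ i.2)
      have h2 : ¬ j.1 = i.1 := fun h => hnotI (h ▸ i.2)
      simp [Option.elim, h1, h2, mul_inv_cancel₀ (hc0 j₁), mul_inv_cancel₀ (hc0 j.1)]
  set X : Matrix (Fin k) (Option ↥I) ℝ := A * MS with hXdef
  set Y : Matrix (Fin k) ↥(Iᶜ.erase j₁) ℝ := B * MD with hYdef
  have hXtY : Xᵀ * Y = 0 := by
    rw [hXdef, hYdef, Matrix.transpose_mul, Matrix.mul_assoc, ← Matrix.mul_assoc Aᵀ B MD,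
      hATB, Matrix.one_mul, horth]
  have hZblocks : (fromCols X Y)ᵀ * (fromCols X Y)
      = fromBlocks (Xᵀ * X) 0 0 (Yᵀ * Y) := by
    rw [Matrix.transpose_fromCols, Matrix.fromRows_mul_fromCols, hXtY]
    have hYtX : Yᵀ * X = 0 := by
      have h := congrArg Matrix.transpose hXtY
      rwa [Matrix.transpose_mul, Matrix.transpose_transpose, Matrix.transpose_zero] at h
    rw [hYtX]
  have hcard : k = Fintype.card (Option ↥I ⊕ ↥(Iᶜ.erase j₁)) := by
    have h1 : I.card + Iᶜ.card = k := by
      rw [Finset.card_add_card_compl, Fintype.card_fin]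
    have h2 : 0 < Iᶜ.card := Finset.card_pos.mpr ⟨j₁, hj₁⟩
    simp only [Fintype.card_sum, Fintype.card_option, Fintype.card_coe,
      Finset.card_erase_of_mem hj₁]
    omega
  set e : Fin k ≃ (Option ↥I ⊕ ↥(Iᶜ.erase j₁)) :=
    Fintype.equivOfCardEq (by rw [Fintype.card_fin]; exact hcard) with hedef
  set Z' : Matrix (Fin k) (Option ↥I ⊕ ↥(Iᶜ.erase j₁)) ℝ := fromCols (Aᵀ * X) MD with hZ'def
  have hZeq : fromCols X Y = B * Z' := by
    rw [hZ'def, Matrix.mul_fromCols, ← Matrix.mul_assoc, hBAT, Matrix.one_mul, ← hYdef]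
  set dZ' : ℝ := (Z'.submatrix id ⇑e).det with hdZ'
  have hrel1 : GS.det * GD.det = (W⁻¹ * dZ')^2 := by
    have h1 := det_mul_det_submatrix (fromCols X Y) (fromCols X Y) e
    rw [hZblocks, Matrix.det_fromBlocks_zero₁₂] at h1
    have h2 : ((fromCols X Y).submatrix id ⇑e).det = W⁻¹ * dZ' := by
      rw [hZeq, hdZ']
      have h3 : (B * Z').submatrix id ⇑e = B * (Z'.submatrix id ⇑e) := by
        ext a b; simp [Matrix.mul_apply, Matrix.submatrix_apply]
      rw [h3, Matrix.det_mul]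
      congr 1
      rw [hBdef, Matrix.det_nonsing_inv, Matrix.det_transpose, Ring.inverse_eq_inv, hWA]
    rw [hGSeq, hGDeq, ← h1, h2]
    ring
  set M : Matrix (Fin k) (Option ↥I ⊕ ↥(Iᶜ.erase j₁)) ℝ := fromCols MS NN with hMdef
  set dM : ℝ := (M.submatrix id ⇑e).det with hdM
  have hNtMD : NNᵀ * MD = diagonal (fun j : ↥(Iᶜ.erase j₁) => -(c j.1)⁻¹) := by
    ext i j
    simp only [Matrix.mul_apply, Matrix.transpose_apply, hNNdef, hMDdef, Matrix.of_apply,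
      ite_mul, one_mul, zero_mul, Finset.sum_ite_eq', Finset.mem_univ, if_true]
    have h1 : ¬ (i.1 : Fin k) = j₁ := (hjJ i).1
    by_cases h : i = j
    · subst h; simp [h1]
    · have h2 : ¬ (i.1 : Fin k) = j.1 := fun hh => h (Subtype.ext hh)
      simp [Matrix.diagonal_apply_ne _ h, h1, h2]
  have hMZ'blocks : Mᵀ * Z'
      = fromBlocks GS 0 (NNᵀ * (Aᵀ * X)) (diagonal (fun j : ↥(Iᶜ.erase j₁) => -(c j.1)⁻¹)) := by
    rw [hMdef, hZ'def, Matrix.transpose_fromCols, Matrix.fromRows_mul_fromCols]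
    rw [← Matrix.mul_assoc MSᵀ Aᵀ X, ← Matrix.transpose_mul, horth, hNtMD, hXdef, ← hGSeq]
  have hrel2 : dM * dZ' = GS.det * ∏ j : ↥(Iᶜ.erase j₁), -(c j.1)⁻¹ := by
    rw [hdM, hdZ', det_mul_det_submatrix, hMZ'blocks, Matrix.det_fromBlocks_zero₁₂,
      Matrix.det_diagonal]
  set MS1 : Matrix (Fin k) (Option ↥I) ℝ :=
    Matrix.of fun a p => p.elim (c a) (fun i => if a = i.1 then 1 else 0) with hMS1def
  set M1 : Matrix (Fin k) (Option ↥I ⊕ ↥(Iᶜ.erase j₁)) ℝ := fromCols MS1 NN with hM1def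
  set w : (Option ↥I ⊕ ↥(Iᶜ.erase j₁)) → ℝ :=
    Sum.elim (fun o => o.elim 0 (fun _ => 1)) (fun _ => 0) with hwdef
  set U : Matrix (Option ↥I ⊕ ↥(Iᶜ.erase j₁)) (Option ↥I ⊕ ↥(Iᶜ.erase j₁)) ℝ :=
    1 + Matrix.replicateCol Unit (Pi.single (Sum.inl none) 1 : (Option ↥I ⊕ ↥(Iᶜ.erase j₁)) → ℝ) * Matrix.replicateRow Unit w with hUdef
  have hdetU : U.det = 1 := by
    rw [hUdef, Matrix.det_one_add_replicateCol_mul_replicateRow]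
    simp [hwdef]
  have hMU : M = M1 * U := by
    rw [hUdef, Matrix.mul_add, Matrix.mul_one, ← Matrix.mul_assoc]
    ext a p
    have hcolrow : (M1 * Matrix.replicateCol Unit (Pi.single (Sum.inl none) 1 : (Option ↥I ⊕ ↥(Iᶜ.erase j₁)) → ℝ) * Matrix.replicateRow Unit w) a p
        = c a * w p := by
      simp only [Matrix.mul_apply, Matrix.replicateCol_apply, Matrix.replicateRow_apply, Pi.single_apply,
        mul_ite, mul_one, mul_zero, Finset.sum_ite_eq', Finset.mem_univ, if_true]
      simp [hM1def, Matrix.fromCols_apply_inl, hMS1def]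
    rw [Matrix.add_apply, hcolrow]
    rcases p with p1 | p2
    · cases p1 with
      | none => simp [hMdef, hM1def, hMSdef, hMS1def, hwdef]
      | some i => simp [hMdef, hM1def, hMSdef, hMS1def, hwdef, add_comm]
    · simp [hMdef, hM1def, hwdef]
  set g : (Option ↥I ⊕ ↥(Iᶜ.erase j₁)) → Fin k :=
    Sum.elim (fun o => o.elim j₁ Subtype.val) Subtype.val with hgdef
  have hginj : Function.Injective g := by
    rintro (p1 | p2) (r1 | r2) h <;>
      simp only [hgdef, Sum.elim_inl, Sum.elim_inr] at h
    · cases p1 with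
      | none => cases r1 with
        | none => rfl
        | some i =>
          simp only [Option.elim] at h
          exact absurd (h ▸ i.2) hj₁I
      | some i => cases r1 with
        | none =>
          simp only [Option.elim] at h
          exact absurd ((h.symm) ▸ i.2) hj₁I
        | some i' =>
          simp only [Option.elim] at h
          exact congrArg _ (congrArg _ (Subtype.ext h))
    · cases p1 with
      | none =>
        simp only [Option.elim] at h
        exact absurd h.symm (hjJ r2).1
      | some i =>
        simp only [Option.elim] at h
        exact absurd (h ▸ i.2) (hjJ r2).2
    · cases r1 with
      | none =>
        simp only [Option.elim] at h
        exact absurd h (hjJ p2).1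
      | some i =>
        simp only [Option.elim] at h
        exact absurd (h.symm ▸ i.2) (hjJ p2).2
    · exact congrArg _ (Subtype.ext h)
  set P : Matrix (Fin k) (Option ↥I ⊕ ↥(Iᶜ.erase j₁)) ℝ :=
    Matrix.of fun a p => if a = g p then 1 else 0 with hPdef
  have hPtP : Pᵀ * P = 1 := by
    ext p r
    simp only [Matrix.mul_apply, Matrix.transpose_apply, hPdef, Matrix.of_apply, ite_mul,
      one_mul, zero_mul, Finset.sum_ite_eq', Finset.mem_univ, if_true]
    by_cases h : p = r
    · subst h; simp
    · have hgne : g p ≠ g r := fun hh => h (hginj hh)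
      simp [Matrix.one_apply_ne h, hgne]
  set T1 : Matrix (Option ↥I) (Option ↥I) ℝ :=
    (1 : Matrix (Option ↥I) (Option ↥I) ℝ).updateRow none
      (fun p => p.elim (c j₁) (fun i => c i.1)) with hT1def
  set B1 : Matrix (Option ↥I) ↥(Iᶜ.erase j₁) ℝ :=
    Matrix.of fun p j => p.elim (c j.1) (fun _ => 0) with hB1def
  have hM1P : M1ᵀ * P = fromBlocks T1 B1 0 1 := by
    ext p r
    simp only [Matrix.mul_apply, Matrix.transpose_apply, hPdef, Matrix.of_apply, mul_ite,
      mul_one, mul_zero, Finset.sum_ite_eq', Finset.mem_univ, if_true]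
    rcases p with p1 | p2 <;> rcases r with r1 | r2
    · cases p1 with
      | none =>
        cases r1 with
        | none =>
          simp [hgdef, hM1def, hMS1def, hT1def]
        | some i' =>
          simp [hgdef, hM1def, hMS1def, hT1def]
      | some i =>
        cases r1 with
        | none =>
          have h1 : ¬ j₁ = i.1 := fun h => hj₁I (h ▸ i.2)
          simp [hgdef, hM1def, hMS1def, hT1def, h1, Matrix.one_apply]
        | some i' =>
          by_cases h : i = i'
          · subst h
            simp [hgdef, hM1def, hMS1def, hT1def, Matrix.one_apply]
          · have h1 : ¬ (i'.1 : Fin k) = i.1 := fun hh => h (Subtype.ext hh.symm)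
            simp [hgdef, hM1def, hMS1def, hT1def, h1, Matrix.one_apply, h,
              (fun hh => h hh.symm : ¬ i' = i)]
            exact fun hh => h hh.symm
    · cases p1 with
      | none =>
        simp [hgdef, hM1def, hMS1def, hB1def]
      | some i =>
        have h1 : ¬ (r2.1 : Fin k) = i.1 := fun hh => (hjJ r2).2 (hh ▸ i.2)
        simp [hgdef, hM1def, hMS1def, hB1def, h1]
    · cases r1 with
      | none =>
        have h1 : ¬ j₁ = p2.1 := fun h => (hjJ p2).1 h.symm
        simp [hgdef, hM1def, hNNdef, h1]
      | some i =>
        have h1 : ¬ (i.1 : Fin k) = p2.1 := fun hh => (hjJ p2).2 (hh ▸ i.2)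
        simp [hgdef, hM1def, hNNdef, h1]
    · by_cases h : p2 = r2
      · subst h; simp [hgdef, hM1def, hNNdef, Matrix.one_apply]
      · have h1 : ¬ (r2.1 : Fin k) = p2.1 := fun hh => h (Subtype.ext hh.symm)
        simp [hgdef, hM1def, hNNdef, h1, Matrix.one_apply, h, (fun hh => h hh.symm : ¬ r2 = p2)]
  have hdetT1 : T1.det = c j₁ := by
    rw [hT1def, ← Matrix.det_transpose, ← Matrix.updateCol_transpose, Matrix.transpose_one,
      ← Matrix.cramer_apply, Matrix.cramer_eq_adjugate_mulVec, Matrix.adjugate_one,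
      Matrix.one_mulVec]
    rfl
  have hrel3 : dM ^ 2 = (c j₁) ^ 2 := by
    have hPP := det_mul_det_submatrix P P e
    rw [hPtP, Matrix.det_one] at hPP
    have hM1P' := det_mul_det_submatrix M1 P e
    rw [hM1P, Matrix.det_fromBlocks_zero₂₁, hdetT1, Matrix.det_one, mul_one] at hM1P'
    have hMsub : M.submatrix id ⇑e = (M1.submatrix id ⇑e) * (U.submatrix ⇑e ⇑e) := by
      rw [hMU]
      exact (Matrix.submatrix_mul_equiv M1 U id e ⇑e).symm
    have hdetUf : (U.submatrix ⇑e ⇑e).det = 1 := by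
      rw [Matrix.det_submatrix_equiv_self, hdetU]
    have hdM1 : dM = (M1.submatrix id ⇑e).det := by
      rw [hdM, hMsub, Matrix.det_mul, hdetUf, mul_one]
    calc dM^2 = ((M1.submatrix id ⇑e).det)^2
          * ((P.submatrix id ⇑e).det * (P.submatrix id ⇑e).det) := by
          rw [hdM1, hPP, mul_one]
      _ = ((M1.submatrix id ⇑e).det * (P.submatrix id ⇑e).det)^2 := by ring
      _ = (c j₁)^2 := by rw [hM1P']
  have hdMne : dM ≠ 0 := by
    intro h
    apply hc0 j₁
    have h2 : (c j₁)^2 = 0 := by rw [← hrel3, h]; ring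
    exact pow_eq_zero_iff (by norm_num) |>.mp h2
  have hXker : ∀ x : Option ↥I → ℝ, X *ᵥ x = 0 → x = 0 := by
    intro x hx
    have h1 : MS *ᵥ x = 0 := by
      have h2 : A⁻¹ *ᵥ (X *ᵥ x) = A⁻¹ *ᵥ 0 := by rw [hx]
      rwa [hXdef, Matrix.mulVec_mulVec, ← Matrix.mul_assoc,
        Matrix.nonsing_inv_mul A (isUnit_iff_ne_zero.mpr hdetA), Matrix.one_mul,
        Matrix.mulVec_zero] at h2
    have h3 : M *ᵥ (Sum.elim x 0) = 0 := by
      rw [hMdef, Matrix.fromCols_mulVec_sumElim, h1, Matrix.mulVec_zero, add_zero]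
    have h4 : (M.submatrix id ⇑e) *ᵥ (Sum.elim x 0 ∘ ⇑e) = 0 := by
      rw [Matrix.submatrix_mulVec_equiv]
      have h5 : (Sum.elim x 0 ∘ ⇑e) ∘ ⇑e.symm = Sum.elim x 0 := by
        funext r; simp
      rw [h5, h3]
      rfl
    have hu : IsUnit (M.submatrix id ⇑e) :=
      (Matrix.isUnit_iff_isUnit_det _).mpr (isUnit_iff_ne_zero.mpr (hdM ▸ hdMne))
    have h6 : Sum.elim x 0 ∘ ⇑e = 0 :=
      Matrix.mulVec_injective_iff_isUnit.mpr hu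
        (h4.trans (Matrix.mulVec_zero (M.submatrix id ⇑e)).symm)
    funext p
    have h7 := congrFun h6 (e.symm (Sum.inl p))
    simpa using h7
  have hGSpos : 0 < GS.det := by
    have hpd : GS.PosDef := by
      refine Matrix.PosDef.of_dotProduct_mulVec_pos ?_ ?_
      · show GSᴴ = GS
        ext p r
        simp only [Matrix.conjTranspose_apply, hGS, star_trivial]
        rw [dotProduct_comm]
      · intro x hx
        have hstar : star x = x := by funext i; simp
        have hquad : star x ⬝ᵥ (GS *ᵥ x) = (X *ᵥ x) ⬝ᵥ (X *ᵥ x) := by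
          rw [hstar, hGSeq, ← Matrix.mulVec_mulVec, Matrix.dotProduct_mulVec,
            Matrix.vecMul_transpose]
        rw [hquad]
        have hne : X *ᵥ x ≠ 0 := fun h => hx (hXker x h)
        have hge : 0 ≤ (X *ᵥ x) ⬝ᵥ (X *ᵥ x) :=
          Finset.sum_nonneg fun i _ => mul_self_nonneg _
        have hne2 : (X *ᵥ x) ⬝ᵥ (X *ᵥ x) ≠ 0 :=
          fun h => hne (dotProduct_self_eq_zero.mp h)
        exact lt_of_le_of_ne hge (Ne.symm hne2)
    exact hpd.det_pos
  have hGSne : GS.det ≠ 0 := ne_of_gt hGSpos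
  set Pe : ℝ := ∏ j ∈ Iᶜ.erase j₁, (c j)^2 with hPedef
  have hPepos : 0 < Pe :=
    Finset.prod_pos fun j _ => lt_of_le_of_ne (sq_nonneg _) (Ne.symm (pow_ne_zero 2 (hc0 j)))
  have hprodsq : (∏ j : ↥(Iᶜ.erase j₁), -(c j.1)⁻¹)^2 = Pe⁻¹ := by
    calc (∏ j : ↥(Iᶜ.erase j₁), -(c j.1)⁻¹)^2
        = ∏ j : ↥(Iᶜ.erase j₁), ((c j.1)^2)⁻¹ := by
          rw [← Finset.prod_pow]
          exact Finset.prod_congr rfl fun j _ => by rw [neg_sq, inv_pow]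
      _ = (∏ j : ↥(Iᶜ.erase j₁), (c j.1)^2)⁻¹ := by rw [Finset.prod_inv_distrib]
      _ = Pe⁻¹ := by
          rw [hPedef]
          congr 1
          exact Finset.prod_coe_sort (Iᶜ.erase j₁) (fun j => (c j)^2)
  have hkey : GD.det = GS.det / (W^2 * ((c j₁)^2 * Pe)) := by
    have h2' : GS.det * GD.det * W^2 = dZ'^2 := by
      rw [hrel1]; field_simp
    have h3' : (c j₁)^2 * dZ'^2 * Pe = GS.det^2 := by
      have h := congrArg (fun t => t^2) hrel2
      simp only [mul_pow] at h
      rw [hrel3, hprodsq] at h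
      rw [h]
      field_simp
    rw [eq_div_iff (mul_ne_zero (pow_ne_zero _ hWne)
      (mul_ne_zero (pow_ne_zero _ (hc0 j₁)) (ne_of_gt hPepos)))]
    have hcancel : GD.det * (W^2 * ((c j₁)^2 * Pe)) * GS.det = GS.det * GS.det := by
      linear_combination ((c j₁)^2 * Pe) * h2' + h3'
    exact mul_right_cancel₀ hGSne hcancel
  have hprodIc : W^2 * ((c j₁)^2 * Pe) = (W * ∏ j ∈ Iᶜ, c j)^2 := by
    rw [hPedef]
    rw [Finset.mul_prod_erase Iᶜ (fun j => (c j)^2) hj₁, Finset.prod_pow, mul_pow]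
  have hsqrtGD : Real.sqrt GD.det = Real.sqrt GS.det / (|W| * ∏ j ∈ Iᶜ, |c j|) := by
    rw [hkey, hprodIc, Real.sqrt_div hGSpos.le, Real.sqrt_sq_eq_abs, abs_mul,
      Finset.abs_prod]
  have habsprod : ∏ j ∈ Iᶜ, |v₀ ⬝ᵥ q j| = |W|^(Iᶜ.card) * ∏ j ∈ Iᶜ, |c j| := by
    calc ∏ j ∈ Iᶜ, |v₀ ⬝ᵥ q j| = ∏ j ∈ Iᶜ, (|W| * |c j|) := by
          refine Finset.prod_congr rfl fun j _ => ?_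
          rw [hvq, abs_mul]
      _ = _ := by rw [Finset.prod_mul_distrib, Finset.prod_const]
  have hspos : 0 < Real.sqrt GS.det := Real.sqrt_pos.mpr hGSpos
  have htpos : 0 < ∏ j ∈ Iᶜ, |c j| := Finset.prod_pos fun j _ => abs_pos.mpr (hc0 j)
  have hWabs : 0 < |W| := abs_pos.mpr hWne
  have hfm : ((I.card + 1).factorial : ℝ) ≠ 0 := Nat.cast_ne_zero.mpr (Nat.factorial_ne_zero _)
  have hfl : ((Iᶜ.card - 1).factorial : ℝ) ≠ 0 := Nat.cast_ne_zero.mpr (Nat.factorial_ne_zero _)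
  have hpow : |W|^(Iᶜ.card) = |W|^(Iᶜ.card - 1) * |W| := by
    conv_lhs => rw [← Nat.succ_pred_eq_of_pos (Finset.card_pos.mpr ⟨j₁, hj₁⟩)]
    rw [pow_succ]
    norm_num [Nat.pred_eq_sub_one]
  rw [hvolS, hvolD, hsqrtGD, habsprod, hpow]
  field_simp
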